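/- arXiv:2012.02928 — 3 statements merged into one kernel-verified Lean document; each statement's English description precedes it below -/
import Mathlib

section
/- Let K and M be closed subspaces of a complex Hilbert space E. Then com(K, M) = {ψ ∈ E | P_K (P_M ψ) = P_M (P_K ψ)}, i.e. the commutator com(K, M) coincides with the kernel of the operator commutator P_K ∘ P_M − P_M ∘ P_K. -/
variable {E : Type*} [NormedAddCommGroup E] [InnerProductSpace ℂ E] [CompleteSpace E]

/-- Orthogonal projection onto (the topological closure of) a submodule, as a
continuous linear operator on `E`. For a closed subspace `K` this is the
orthogonal projection `P_K` onto `K` itself. -/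
noncomputable def proj (K : Submodule ℂ E) : E →L[ℂ] E :=
  K.topologicalClosure.subtypeL.comp (Submodule.orthogonalProjectionOnto K.topologicalClosure)

/-- The commutator `com(K, M)` of two subspaces. -/
noncomputable def com (K M : Submodule ℂ E) : Submodule ℂ E :=
  (K ⊓ M) ⊔ (K ⊓ Mᗮ) ⊔ (Kᗮ ⊓ M) ⊔ (Kᗮ ⊓ Mᗮ)

lemma proj_mem {K : Submodule ℂ E} (hK : IsClosed (K : Set E)) (x : E) : proj K x ∈ K := by
  have : proj K x ∈ K.topologicalClosure := (Submodule.orthogonalProjectionOnto K.topologicalClosure x).2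
  rwa [hK.submodule_topologicalClosure_eq] at this

lemma proj_eq_self {K : Submodule ℂ E} (hK : IsClosed (K : Set E)) {x : E} (hx : x ∈ K) :
    proj K x = x := by
  have : x ∈ K.topologicalClosure := by rwa [hK.submodule_topologicalClosure_eq]
  exact Submodule.starProjection_eq_self_iff.mpr this

lemma proj_eq_zero {K : Submodule ℂ E} (hK : IsClosed (K : Set E)) {x : E} (hx : x ∈ Kᗮ) :
    proj K x = 0 := by
  have : x ∈ K.topologicalClosureᗮ := by rwa [hK.submodule_topologicalClosure_eq]
  simp [proj, Submodule.orthogonalProjectionOnto_apply_of_mem_orthogonal this]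

lemma sub_proj_mem {K : Submodule ℂ E} (hK : IsClosed (K : Set E)) (x : E) :
    x - proj K x ∈ Kᗮ := by
  have : x - proj K x ∈ K.topologicalClosureᗮ :=
    Submodule.sub_starProjection_mem_orthogonal (K := K.topologicalClosure) x
  rwa [hK.submodule_topologicalClosure_eq] at this

theorem stmt1 (K M : Submodule ℂ E) (hK : IsClosed (K : Set E)) (hM : IsClosed (M : Set E)) :
    (com K M : Set E) = {ψ : E | proj K (proj M ψ) = proj M (proj K ψ)} := by
  ext ψ
  simp only [SetLike.mem_coe, Set.mem_setOf_eq]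
  constructor
  · intro hψ
    -- decompose ψ = a + b + c + d
    rw [com, sup_assoc, sup_assoc] at hψ
    rw [Submodule.mem_sup] at hψ
    obtain ⟨a, ha, r, hr, rfl⟩ := hψ
    rw [Submodule.mem_sup] at hr
    obtain ⟨b, hb, s, hs, rfl⟩ := hr
    rw [Submodule.mem_sup] at hs
    obtain ⟨c, hc, d, hd, rfl⟩ := hs
    have paK := proj_eq_self hK ha.1
    have paM := proj_eq_self hM ha.2
    have pbK := proj_eq_self hK hb.1
    have pbM := proj_eq_zero hM hb.2
    have pcK := proj_eq_zero hK hc.1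
    have pcM := proj_eq_self hM hc.2
    have pdK := proj_eq_zero hK hd.1
    have pdM := proj_eq_zero hM hd.2
    simp [map_add, paK, paM, pbK, pbM, pcK, pcM, pdK, pdM]
  · intro h
    have haK : proj K (proj M ψ) ∈ K := proj_mem hK _
    have haM : proj K (proj M ψ) ∈ M := h ▸ proj_mem hM _
    have hbK : proj K ψ - proj K (proj M ψ) ∈ K :=
      Submodule.sub_mem _ (proj_mem hK _) haK
    have hbM : proj K ψ - proj K (proj M ψ) ∈ Mᗮ := by
      rw [h]; exact sub_proj_mem hM _
    have hcM : proj M ψ - proj M (proj K ψ) ∈ M :=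
      Submodule.sub_mem _ (proj_mem hM _) (proj_mem hM _)
    have hcK : proj M ψ - proj M (proj K ψ) ∈ Kᗮ := by
      rw [← h]; exact sub_proj_mem hK _
    have hdK : (ψ - proj K ψ) - (proj M ψ - proj M (proj K ψ)) ∈ Kᗮ :=
      Submodule.sub_mem _ (sub_proj_mem hK _) hcK
    have hdM : (ψ - proj K ψ) - (proj M ψ - proj M (proj K ψ)) ∈ Mᗮ := by
      have : (ψ - proj K ψ) - (proj M ψ - proj M (proj K ψ))
          = (ψ - proj M ψ) - (proj K ψ - proj K (proj M ψ)) := by rw [h]; abel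
      rw [this]
      exact Submodule.sub_mem _ (sub_proj_mem hM _) hbM
    have hdecomp : ψ = proj K (proj M ψ) + (proj K ψ - proj K (proj M ψ))
        + (proj M ψ - proj M (proj K ψ))
        + ((ψ - proj K ψ) - (proj M ψ - proj M (proj K ψ))) := by abel
    rw [hdecomp]
    refine Submodule.add_mem _ (Submodule.add_mem _ (Submodule.add_mem _ ?_ ?_) ?_) ?_
    · exact Submodule.mem_sup_left (Submodule.mem_sup_left (Submodule.mem_sup_left ⟨haK, haM⟩))
    · exact Submodule.mem_sup_left (Submodule.mem_sup_left (Submodule.mem_sup_right ⟨hbK, hbM⟩))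
    · exact Submodule.mem_sup_left (Submodule.mem_sup_right ⟨hcK, hcM⟩)
    · exact Submodule.mem_sup_right ⟨hdK, hdM⟩
end

section
/- Let K and M be closed subspaces of a complex Hilbert space E. Then the Sasaki arrow satisfies modus tollens (MT): Mᗮ ⊓ (K ⇒ M) ≤ Kᗮ. -/
variable {E : Type*} [NormedAddCommGroup E] [InnerProductSpace ℂ E] [CompleteSpace E]

/-- The Sasaki arrow `K ⇒ M`. -/
noncomputable def sasaki (K M : Submodule ℂ E) : Submodule ℂ E :=
  Kᗮ ⊔ (K ⊓ M)

theorem stmt6 (K M : Submodule ℂ E) (hK : IsClosed (K : Set E)) (hM : IsClosed (M : Set E)) :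
    Mᗮ ⊓ sasaki K M ≤ Kᗮ := by
  rintro x ⟨hxM, hxS⟩
  have hxS' : x ∈ Kᗮ ⊔ (K ⊓ M) := hxS
  obtain ⟨a, ha, b, hb, rfl⟩ := Submodule.mem_sup.mp hxS'
  have hbK : b ∈ K := hb.1
  have h1 : inner (𝕜 := ℂ) (a + b) b = 0 :=
    (Submodule.mem_orthogonal Mᗮ _).mp ((Submodule.le_orthogonal_orthogonal M) hb.2) _ hxM
  have h2 : inner (𝕜 := ℂ) a b = 0 := by
    have := ha b hbK
    rw [← inner_conj_symm, this, map_zero]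
  have hb0 : b = 0 := by
    have : inner (𝕜 := ℂ) b b = 0 := by
      rw [inner_add_left, h2, zero_add] at h1; exact h1
    exact inner_self_eq_zero.mp this
  simpa [hb0] using ha
end

section
/- Let K and M be closed subspaces of a complex Hilbert space E. Then the Sasaki projection admits the decomposition K ∗ M = (K ⊓ M) ⊔ (K ⊓ com(K, M)ᗮ). -/
variable {E : Type*} [NormedAddCommGroup E] [InnerProductSpace ℂ E] [CompleteSpace E]

/-- The Sasaki projection `K ∗ M := (K ⇒ Mᗮ)ᗮ`. -/
noncomputable def sproj (K M : Submodule ℂ E) : Submodule ℂ E :=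
  (sasaki K Mᗮ)ᗮ

theorem stmt10 (K M : Submodule ℂ E) (hK : IsClosed (K : Set E)) (hM : IsClosed (M : Set E)) :
    sproj K M = (K ⊓ M) ⊔ (K ⊓ (com K M)ᗮ) := by
  haveI := hK.completeSpace_coe
  have hA : IsClosed ((K ⊓ M : Submodule ℂ E) : Set E) := by
    rw [Submodule.coe_inf]; exact hK.inter hM
  haveI := hA.completeSpace_coe
  have h1 : sproj K M = K ⊓ (K ⊓ Mᗮ)ᗮ := by
    unfold sproj sasaki
    rw [← Submodule.inf_orthogonal, Submodule.orthogonal_orthogonal]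
  have hcom : (com K M)ᗮ = (K ⊓ M)ᗮ ⊓ (K ⊓ Mᗮ)ᗮ ⊓ (Kᗮ ⊓ M)ᗮ ⊓ (Kᗮ ⊓ Mᗮ)ᗮ := by
    unfold com
    rw [← Submodule.inf_orthogonal, ← Submodule.inf_orthogonal, ← Submodule.inf_orthogonal]
  rw [h1]
  apply le_antisymm
  · intro x hx
    obtain ⟨hxK, hxB⟩ := hx
    set y : E := ↑(Submodule.orthogonalProjectionOnto (K ⊓ M) x) with hy
    have hyA : y ∈ K ⊓ M := (Submodule.orthogonalProjectionOnto (K ⊓ M) x).2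
    have hzA : x - y ∈ (K ⊓ M)ᗮ := Submodule.sub_starProjection_mem_orthogonal (K := K ⊓ M) x
    have hzK : x - y ∈ K := K.sub_mem hxK hyA.1
    have hzB : x - y ∈ (K ⊓ Mᗮ)ᗮ := by
      intro b hb
      have h1 : (inner ℂ b x : ℂ) = 0 := hxB b hb
      have h2 : (inner ℂ b y : ℂ) = 0 := by
        rw [inner_eq_zero_symm]
        exact hb.2 y hyA.2
      rw [inner_sub_right, h1, h2, sub_zero]
    have hzC : x - y ∈ (Kᗮ ⊓ M)ᗮ := Submodule.orthogonal_le inf_le_left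
      (K.le_orthogonal_orthogonal hzK)
    have hzD : x - y ∈ (Kᗮ ⊓ Mᗮ)ᗮ := Submodule.orthogonal_le inf_le_left
      (K.le_orthogonal_orthogonal hzK)
    have hzcom : x - y ∈ (com K M)ᗮ := by
      rw [hcom]; exact ⟨⟨⟨hzA, hzB⟩, hzC⟩, hzD⟩
    exact Submodule.mem_sup.2 ⟨y, hyA, x - y, ⟨hzK, hzcom⟩, by abel⟩
  · apply sup_le
    · intro x hx
      refine ⟨hx.1, fun b hb => ?_⟩
      rw [inner_eq_zero_symm]
      exact hb.2 x hx.2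
    · exact le_inf inf_le_left (le_trans inf_le_right
        (Submodule.orthogonal_le (le_sup_of_le_left (le_sup_of_le_left le_sup_right))))
end
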